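/- Let s_1 and s_2 be coprime positive integers. Then the connected one-dimensional closed subgroup {(θ_1, θ_2) ∈ T^2 : s_1θ_1 − s_2θ_2 = 0 in ℝ/ℤ} (a subgroup of positive slope s = s_1/s_2) intersects Π_3, i.e., contains a point of the form q(x, y) with 0 < x < 1/3 and 0 < y < 1/3. -/

import Mathlib

noncomputable section

/-- The two-dimensional torus `T² = (ℝ/ℤ)²`. -/
abbrev T2 := AddCircle (1 : ℝ) × AddCircle (1 : ℝ)

/-- `Π_r ⊂ T²`, the image under `q` of the open square `(0, 1/r)²`. -/
def PiSquare (r : ℕ) : Set T2 :=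
  {θ : T2 | ∃ x y : ℝ, 0 < x ∧ x < 1 / (r : ℝ) ∧ 0 < y ∧ y < 1 / (r : ℝ) ∧
    θ = ((x : AddCircle (1 : ℝ)), (y : AddCircle (1 : ℝ)))}

/-- For coprime positive integers `s₁, s₂`, the subgroup
`{(θ₁, θ₂) ∈ T² : s₁θ₁ - s₂θ₂ = 0}` (of positive slope `s = s₁/s₂`) intersects `Π₃`:
it contains a point `q(x, y)` with `0 < x < 1/3` and `0 < y < 1/3`. -/
theorem positive_slope_meets_piSquare_three
    (s1 s2 : ℤ) (h1 : 0 < s1) (h2 : 0 < s2) (hco : IsCoprime s1 s2) :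
    ∃ x y : ℝ, 0 < x ∧ x < 1 / 3 ∧ 0 < y ∧ y < 1 / 3 ∧
      ((x : AddCircle (1 : ℝ)), (y : AddCircle (1 : ℝ))) ∈
        ({θ : T2 | s1 • θ.1 - s2 • θ.2 = 0} ∩ PiSquare 3) := by
  have h1' : (0:ℝ) < (s1:ℝ) := by exact_mod_cast h1
  have h2' : (0:ℝ) < (s2:ℝ) := by exact_mod_cast h2
  have h1'' : (1:ℝ) ≤ (s1:ℝ) := by exact_mod_cast h1
  have h2'' : (1:ℝ) ≤ (s2:ℝ) := by exact_mod_cast h2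
  refine ⟨1/(6*(s1:ℝ)), 1/(6*(s2:ℝ)), by positivity, ?_, by positivity, ?_, ?_, ?_⟩
  · rw [div_lt_div_iff₀ (by positivity) (by norm_num)]
    nlinarith
  · rw [div_lt_div_iff₀ (by positivity) (by norm_num)]
    nlinarith
  · show s1 • ((1/(6*(s1:ℝ)) : ℝ) : AddCircle (1:ℝ)) - s2 • ((1/(6*(s2:ℝ)) : ℝ) : AddCircle (1:ℝ)) = 0
    rw [← AddCircle.coe_zsmul, ← AddCircle.coe_zsmul, ← AddCircle.coe_sub]
    have : (s1:ℝ) • (1/(6*(s1:ℝ))) - (s2:ℝ) • (1/(6*(s2:ℝ))) = 0 := by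
      field_simp
      simp [h1'.ne', h2'.ne']
    rw [show s1 • (1/(6*(s1:ℝ))) = (s1:ℝ) • (1/(6*(s1:ℝ))) by simp,
        show s2 • (1/(6*(s2:ℝ))) = (s2:ℝ) • (1/(6*(s2:ℝ))) by simp, this]
    simp
  · exact ⟨1/(6*(s1:ℝ)), 1/(6*(s2:ℝ)), by positivity, by
      rw [div_lt_div_iff₀ (by positivity) (by norm_num)]; push_cast; nlinarith,
      by positivity, by
      rw [div_lt_div_iff₀ (by positivity) (by norm_num)]; push_cast; nlinarith, rfl⟩
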